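/- Under the diminishing learning-rate assumptions, lim_{K→∞} RE(X̄^K, X̄^{K+1}) = 0, and consequently lim_{K→∞} ‖X̄^{K+1} − X̄^K‖ = 0 in the Euclidean norm. -/

import Mathlib

open Filter Topology Finset Matrix

noncomputable section

/-- Membership in the probability simplex Δ ⊆ ℝ^n. -/
def isSimplex {n : ℕ} (X : Fin n → ℝ) : Prop :=
  (∀ i, 0 ≤ X i) ∧ ∑ i, X i = 1

/-- Interior point of the probability simplex. -/
def isInteriorPt {n : ℕ} (X : Fin n → ℝ) : Prop :=
  (∀ i, 0 < X i) ∧ ∑ i, X i = 1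

/-- The Hedge map T_α. -/
noncomputable def hedge {n : ℕ} (C : Matrix (Fin n) (Fin n) ℝ) (a : ℝ) (X : Fin n → ℝ) :
    Fin n → ℝ :=
  fun i => X i * Real.exp (a * C.mulVec X i) / ∑ j, X j * Real.exp (a * C.mulVec X j)

/-- Hedge iterates: X^0 = X0, X^{k+1} = T_{α_k}(X^k). -/
noncomputable def hiter {n : ℕ} (C : Matrix (Fin n) (Fin n) ℝ) (a : ℕ → ℝ) (X0 : Fin n → ℝ) :
    ℕ → Fin n → ℝ
  | 0 => X0
  | k + 1 => hedge C (a k) (hiter C a X0 k)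

/-- A_K = ∑_{k=0}^K α_k. -/
noncomputable def pSum (a : ℕ → ℝ) (K : ℕ) : ℝ := ∑ k ∈ Finset.range (K + 1), a k

/-- Weighted empirical average X̄^K = (1/A_K) ∑_{k=0}^K α_k X^k. -/
noncomputable def wavg {n : ℕ} (C : Matrix (Fin n) (Fin n) ℝ) (a : ℕ → ℝ) (X0 : Fin n → ℝ)
    (K : ℕ) : Fin n → ℝ :=
  (pSum a K)⁻¹ • ∑ k ∈ Finset.range (K + 1), a k • hiter C a X0 k

/-- Relative entropy RE(Y, X) = ∑_{i : Y(i) > 0} Y(i) ln(Y(i)/X(i)). -/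
noncomputable def RE {n : ℕ} (Y X : Fin n → ℝ) : ℝ :=
  ∑ i ∈ Finset.univ.filter (fun i => 0 < Y i), Y i * Real.log (Y i / X i)

/-- (CX)_max = max_i (CX)_i. -/
noncomputable def cmax {n : ℕ} (C : Matrix (Fin n) (Fin n) ℝ) (X : Fin n → ℝ) : ℝ :=
  ⨆ i, C.mulVec X i

/-- X̄ is a limit point of the sequence of weighted empirical averages. -/
def isLimitPoint {n : ℕ} (C : Matrix (Fin n) (Fin n) ℝ) (a : ℕ → ℝ) (X0 : Fin n → ℝ)
    (Xb : Fin n → ℝ) : Prop :=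
  ∃ φ : ℕ → ℕ, StrictMono φ ∧ Tendsto (fun j => wavg C a X0 (φ j)) atTop (𝓝 Xb)
section aux
variable {n : ℕ} (C : Matrix (Fin n) (Fin n) ℝ) (a : ℕ → ℝ) (X0 : Fin n → ℝ)

lemma hedge_interior (hn : 0 < n) {X : Fin n → ℝ} (hX : isInteriorPt X) (α : ℝ) :
    isInteriorPt (hedge C α X) := by
  have : Nonempty (Fin n) := Fin.pos_iff_nonempty.mp hn
  have hd : 0 < ∑ j, X j * Real.exp (α * C.mulVec X j) :=
    Finset.sum_pos (fun j _ => mul_pos (hX.1 j) (Real.exp_pos _))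
      (by simp [Finset.univ_nonempty])
  constructor
  · intro i
    exact div_pos (mul_pos (hX.1 i) (Real.exp_pos _)) hd
  · simp only [hedge]
    rw [← Finset.sum_div]
    exact div_self hd.ne'

lemma hiter_interior (hn : 0 < n) (hX0 : isInteriorPt X0) (k : ℕ) :
    isInteriorPt (hiter C a X0 k) := by
  induction k with
  | zero => exact hX0
  | succ k ih => exact hedge_interior C hn ih (a k)

lemma pSum_pos (hapos : ∀ k, 0 < a k) (K : ℕ) : 0 < pSum a K :=
  Finset.sum_pos (fun k _ => hapos k) (Finset.nonempty_range_add_one)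

lemma pSum_succ (K : ℕ) : pSum a (K + 1) = pSum a K + a (K + 1) :=
  Finset.sum_range_succ a (K + 1)

lemma wavg_apply (K : ℕ) (i : Fin n) :
    wavg C a X0 K i = (pSum a K)⁻¹ * ∑ k ∈ Finset.range (K + 1), a k * hiter C a X0 k i := by
  simp [wavg, Finset.sum_apply, smul_eq_mul]

lemma wavg_nonneg (hn : 0 < n) (hapos : ∀ k, 0 < a k) (hX0 : isInteriorPt X0) (K : ℕ)
    (i : Fin n) : 0 ≤ wavg C a X0 K i := by
  rw [wavg_apply]
  exact mul_nonneg (inv_nonneg.mpr (pSum_pos a hapos K).le)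
    (Finset.sum_nonneg fun k _ => mul_nonneg (hapos k).le
      ((hiter_interior C a X0 hn hX0 k).1 i).le)

lemma wavg_sum (hn : 0 < n) (hapos : ∀ k, 0 < a k) (hX0 : isInteriorPt X0) (K : ℕ) :
    ∑ i, wavg C a X0 K i = 1 := by
  have h : ∑ i, wavg C a X0 K i
      = (pSum a K)⁻¹ * ∑ k ∈ Finset.range (K + 1), a k *
        ∑ i, hiter C a X0 k i := by
    simp only [wavg_apply, ← Finset.mul_sum]
    rw [Finset.sum_comm]
    congr 1
    exact Finset.sum_congr rfl fun k _ => by rw [Finset.mul_sum]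
  rw [h]
  have : ∀ k ∈ Finset.range (K + 1), a k * ∑ i, hiter C a X0 k i = a k := fun k _ => by
    rw [(hiter_interior C a X0 hn hX0 k).2, mul_one]
  rw [Finset.sum_congr rfl this]
  exact inv_mul_cancel₀ (pSum_pos a hapos K).ne'

lemma wavg_succ_apply (hapos : ∀ k, 0 < a k) (K : ℕ) (i : Fin n) :
    wavg C a X0 (K + 1) i = (pSum a (K + 1))⁻¹ *
      (pSum a K * wavg C a X0 K i + a (K + 1) * hiter C a X0 (K + 1) i) := by
  rw [wavg_apply, wavg_apply, mul_inv_cancel_left₀ (pSum_pos a hapos K).ne',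
    Finset.sum_range_succ]

end aux

/-- RE(X̄^K, X̄^{K+1}) → 0 and ‖X̄^{K+1} − X̄^K‖ → 0 (Euclidean norm). -/
theorem stmt18 {n : ℕ} (hn : 0 < n) (C : Matrix (Fin n) (Fin n) ℝ)
    (hC : ∀ i j, 0 ≤ C i j)
    (a : ℕ → ℝ) (hapos : ∀ k, 0 < a k)
    (ha0 : Tendsto a atTop (𝓝 0))
    (hadiv : Tendsto (pSum a) atTop atTop)
    (hasum : Summable fun k => a k * (Real.exp (a k) - 1))
    (X0 : Fin n → ℝ) (hX0 : isInteriorPt X0) :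
    Tendsto (fun K => RE (wavg C a X0 K) (wavg C a X0 (K + 1))) atTop (𝓝 0) ∧
    Tendsto (fun K => Real.sqrt (∑ i, (wavg C a X0 (K + 1) i - wavg C a X0 K i) ^ 2))
      atTop (𝓝 0) := by
  have hInt : ∀ k, isInteriorPt (hiter C a X0 k) := hiter_interior C a X0 hn hX0
  have hWnn : ∀ K i, 0 ≤ wavg C a X0 K i := wavg_nonneg C a X0 hn hapos hX0
  have hWsum : ∀ K, ∑ i, wavg C a X0 K i = 1 := wavg_sum C a X0 hn hapos hX0
  have hApos : ∀ K, 0 < pSum a K := pSum_pos a hapos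
  have hWle : ∀ K i, wavg C a X0 K i ≤ 1 := fun K i =>
    (Finset.single_le_sum (fun j _ => hWnn K j) (Finset.mem_univ i)).trans (hWsum K).le
  have hXle : ∀ k i, hiter C a X0 k i ≤ 1 := fun k i =>
    (Finset.single_le_sum (fun j _ => ((hInt k).1 j).le) (Finset.mem_univ i)).trans
      (hInt k).2.le
  have ha1 : Tendsto (fun K => a (K + 1)) atTop (𝓝 0) := ha0.comp (tendsto_add_atTop_nat 1)
  have hAinv : Tendsto (fun K => (pSum a K)⁻¹) atTop (𝓝 0) := hadiv.inv_tendsto_atTop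
  have hAinv1 : Tendsto (fun K => (pSum a (K + 1))⁻¹) atTop (𝓝 0) :=
    hAinv.comp (tendsto_add_atTop_nat 1)
  have hr : Tendsto (fun K => a (K + 1) * (pSum a K)⁻¹) atTop (𝓝 0) := by
    simpa using ha1.mul hAinv
  have hr1 : Tendsto (fun K => (pSum a (K + 1))⁻¹ * a (K + 1)) atTop (𝓝 0) := by
    simpa using hAinv1.mul ha1
  -- lower bound on the new average in terms of the old one
  have hX_ge : ∀ K i, (pSum a (K + 1))⁻¹ * pSum a K * wavg C a X0 K i
      ≤ wavg C a X0 (K + 1) i := by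
    intro K i
    rw [wavg_succ_apply C a X0 hapos K i, mul_assoc]
    refine mul_le_mul_of_nonneg_left (le_add_of_nonneg_right ?_)
      (inv_nonneg.mpr (hApos (K + 1)).le)
    exact mul_nonneg (hapos (K + 1)).le ((hInt (K + 1)).1 i).le
  constructor
  · -- RE part
    have hub : ∀ K, RE (wavg C a X0 K) (wavg C a X0 (K + 1)) ≤
        Real.log (1 + a (K + 1) * (pSum a K)⁻¹) := by
      intro K
      set Y := wavg C a X0 K with hY
      set X := wavg C a X0 (K + 1) with hXdef
      have hA := hApos K
      have hA' := hApos (K + 1)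
      have hc := hapos (K + 1)
      have hone : (1 : ℝ) ≤ 1 + a (K + 1) * (pSum a K)⁻¹ := by
        nlinarith [mul_pos hc (inv_pos.mpr hA)]
      have hL : 0 ≤ Real.log (1 + a (K + 1) * (pSum a K)⁻¹) := Real.log_nonneg hone
      have key : ∀ i ∈ Finset.univ.filter (fun i => 0 < Y i),
          Y i * Real.log (Y i / X i) ≤ Y i * Real.log (1 + a (K + 1) * (pSum a K)⁻¹) := by
        intro i hi
        have hYi : 0 < Y i := (Finset.mem_filter.mp hi).2
        have h1 : (pSum a (K + 1))⁻¹ * pSum a K * Y i ≤ X i := hX_ge K i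
        have hXi : 0 < X i :=
          lt_of_lt_of_le (mul_pos (mul_pos (inv_pos.mpr hA') hA) hYi) h1
        refine mul_le_mul_of_nonneg_left ?_ hYi.le
        refine Real.log_le_log (div_pos hYi hXi) ?_
        rw [div_le_iff₀ hXi]
        have hps : pSum a (K + 1) = pSum a K + a (K + 1) := pSum_succ a K
        have hconv : 1 + a (K + 1) * (pSum a K)⁻¹ = pSum a (K + 1) / pSum a K := by
          rw [hps]; field_simp
        have h2 : pSum a K * Y i ≤ pSum a (K + 1) * X i := by
          have h3 := mul_le_mul_of_nonneg_left h1 hA'.le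
          rw [← mul_assoc, ← mul_assoc, mul_inv_cancel₀ hA'.ne', one_mul] at h3
          exact h3
        rw [hconv, div_mul_eq_mul_div, le_div_iff₀ hA]
        nlinarith [h2]
      calc RE Y X ≤ ∑ i ∈ Finset.univ.filter (fun i => 0 < Y i),
            Y i * Real.log (1 + a (K + 1) * (pSum a K)⁻¹) := Finset.sum_le_sum key
        _ = (∑ i ∈ Finset.univ.filter (fun i => 0 < Y i), Y i) *
            Real.log (1 + a (K + 1) * (pSum a K)⁻¹) := by rw [Finset.sum_mul]
        _ ≤ 1 * Real.log (1 + a (K + 1) * (pSum a K)⁻¹) := by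
            refine mul_le_mul_of_nonneg_right ?_ hL
            calc ∑ i ∈ Finset.univ.filter (fun i => 0 < Y i), Y i
                ≤ ∑ i, Y i := Finset.sum_le_sum_of_subset_of_nonneg
                  (Finset.filter_subset _ _) (fun i _ _ => hWnn K i)
              _ = 1 := hWsum K
        _ = Real.log (1 + a (K + 1) * (pSum a K)⁻¹) := one_mul _
    have hlb : ∀ K, 0 ≤ RE (wavg C a X0 K) (wavg C a X0 (K + 1)) := by
      intro K
      set Y := wavg C a X0 K with hY
      set X := wavg C a X0 (K + 1) with hXdef
      have hfull : ∑ i ∈ Finset.univ.filter (fun i => 0 < Y i), Y i = 1 := by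
        rw [← hWsum K]
        refine Finset.sum_subset (Finset.filter_subset _ _) fun i _ hi => ?_
        simp only [Finset.mem_filter, Finset.mem_univ, true_and, not_lt] at hi
        linarith [hWnn K i]
      have key : ∀ i ∈ Finset.univ.filter (fun i => 0 < Y i),
          Y i - X i ≤ Y i * Real.log (Y i / X i) := by
        intro i hi
        have hYi : 0 < Y i := (Finset.mem_filter.mp hi).2
        have h1 : (pSum a (K + 1))⁻¹ * pSum a K * Y i ≤ X i := hX_ge K i
        have hXi : 0 < X i := lt_of_lt_of_le
          (mul_pos (mul_pos (inv_pos.mpr (hApos (K + 1))) (hApos K)) hYi) h1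
        have h := Real.log_le_sub_one_of_pos (div_pos hXi hYi)
        have hXY : Y i * (X i / Y i) = X i := by field_simp
        rw [Real.log_div hYi.ne' hXi.ne']
        rw [Real.log_div hXi.ne' hYi.ne'] at h
        nlinarith [mul_le_mul_of_nonneg_left h hYi.le]
      calc (0 : ℝ) = ∑ i ∈ Finset.univ.filter (fun i => 0 < Y i), Y i -
            ∑ i, X i := by rw [hfull, hWsum (K + 1)]; ring
        _ ≤ ∑ i ∈ Finset.univ.filter (fun i => 0 < Y i), Y i -
            ∑ i ∈ Finset.univ.filter (fun i => 0 < Y i), X i := by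
            have : ∑ i ∈ Finset.univ.filter (fun i => 0 < Y i), X i ≤ ∑ i, X i :=
              Finset.sum_le_sum_of_subset_of_nonneg (Finset.filter_subset _ _)
                (fun i _ _ => hWnn (K + 1) i)
            linarith
        _ = ∑ i ∈ Finset.univ.filter (fun i => 0 < Y i), (Y i - X i) := by
            rw [Finset.sum_sub_distrib]
        _ ≤ RE Y X := Finset.sum_le_sum key
    have hlog : Tendsto (fun K => Real.log (1 + a (K + 1) * (pSum a K)⁻¹)) atTop (𝓝 0) := by
      have h1 : Tendsto (fun K => 1 + a (K + 1) * (pSum a K)⁻¹) atTop (𝓝 1) := by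
        simpa using tendsto_const_nhds.add hr
      have := (Real.continuousAt_log one_ne_zero).tendsto.comp h1
      simpa [Function.comp_def] using this
    exact tendsto_of_tendsto_of_tendsto_of_le_of_le tendsto_const_nhds hlog hlb hub
  · -- norm part
    have hdiff : ∀ K i, wavg C a X0 (K + 1) i - wavg C a X0 K i =
        (pSum a (K + 1))⁻¹ * a (K + 1) * (hiter C a X0 (K + 1) i - wavg C a X0 K i) := by
      intro K i
      have hA' := (hApos (K + 1)).ne'
      rw [wavg_succ_apply C a X0 hapos K i, pSum_succ]
      rw [pSum_succ] at hA'
      field_simp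
      ring
    have hub : ∀ K, Real.sqrt (∑ i, (wavg C a X0 (K + 1) i - wavg C a X0 K i) ^ 2) ≤
        Real.sqrt n * ((pSum a (K + 1))⁻¹ * a (K + 1)) := by
      intro K
      have hq : (0 : ℝ) ≤ (pSum a (K + 1))⁻¹ * a (K + 1) :=
        mul_nonneg (inv_nonneg.mpr (hApos (K + 1)).le) (hapos (K + 1)).le
      have hsum : ∑ i, (wavg C a X0 (K + 1) i - wavg C a X0 K i) ^ 2 ≤
          (n : ℝ) * ((pSum a (K + 1))⁻¹ * a (K + 1)) ^ 2 := by
        calc ∑ i, (wavg C a X0 (K + 1) i - wavg C a X0 K i) ^ 2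
            ≤ ∑ _i : Fin n, ((pSum a (K + 1))⁻¹ * a (K + 1)) ^ 2 := by
              refine Finset.sum_le_sum fun i _ => ?_
              rw [hdiff K i]
              have habs : |hiter C a X0 (K + 1) i - wavg C a X0 K i| ≤ 1 :=
                abs_le.mpr ⟨by linarith [hWle K i, ((hInt (K + 1)).1 i).le],
                  by linarith [hWnn K i, hXle (K + 1) i]⟩
              calc ((pSum a (K + 1))⁻¹ * a (K + 1) *
                    (hiter C a X0 (K + 1) i - wavg C a X0 K i)) ^ 2
                  = ((pSum a (K + 1))⁻¹ * a (K + 1)) ^ 2 *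
                    (hiter C a X0 (K + 1) i - wavg C a X0 K i) ^ 2 := by ring
                _ ≤ ((pSum a (K + 1))⁻¹ * a (K + 1)) ^ 2 * 1 := by
                    refine mul_le_mul_of_nonneg_left ?_ (by positivity)
                    calc (hiter C a X0 (K + 1) i - wavg C a X0 K i) ^ 2
                        = |hiter C a X0 (K + 1) i - wavg C a X0 K i| ^ 2 :=
                          (sq_abs _).symm
                      _ ≤ 1 ^ 2 := pow_le_pow_left₀ (abs_nonneg _) habs 2
                      _ = 1 := one_pow 2
                _ = ((pSum a (K + 1))⁻¹ * a (K + 1)) ^ 2 := mul_one _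
          _ = (n : ℝ) * ((pSum a (K + 1))⁻¹ * a (K + 1)) ^ 2 := by
              simp [Finset.card_univ, mul_comm]
      calc Real.sqrt (∑ i, (wavg C a X0 (K + 1) i - wavg C a X0 K i) ^ 2)
          ≤ Real.sqrt ((n : ℝ) * ((pSum a (K + 1))⁻¹ * a (K + 1)) ^ 2) :=
            Real.sqrt_le_sqrt hsum
        _ = Real.sqrt n * ((pSum a (K + 1))⁻¹ * a (K + 1)) := by
            rw [Real.sqrt_mul (Nat.cast_nonneg n), Real.sqrt_sq hq]
    have hbnd : Tendsto (fun K => Real.sqrt n * ((pSum a (K + 1))⁻¹ * a (K + 1)))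
        atTop (𝓝 0) := by
      simpa using tendsto_const_nhds.mul hr1
    exact tendsto_of_tendsto_of_tendsto_of_le_of_le tendsto_const_nhds hbnd
      (fun K => Real.sqrt_nonneg _) hub
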